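/- If a linear map Φ : ℝ^d → ℝ^q satisfies (1-ε)‖y^i - y^j‖² ≤ ‖Φy^i - Φy^j‖² ≤ (1+ε)‖y^i - y^j‖² for all pairs of points in a finite sample (y^i)_{i=1}^n, then the empirical variance is preserved up to ε: (1-ε)·Var((y^i)) ≤ Var((Φy^i)) ≤ (1+ε)·Var((y^i)), where Var((z^i)_{i=1}^n) = (1/n)∑_i ‖z^i - (1/n)∑_j z^j‖². -/

import Mathlib

noncomputable def empVar {E : Type*} [NormedAddCommGroup E] [NormedSpace ℝ E]
    {n : ℕ} (z : Fin n → E) : ℝ :=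
  (1 / (n : ℝ)) * ∑ i, ‖z i - (1 / (n : ℝ)) • ∑ j, z j‖ ^ 2

lemma empVar_eq_pairwise {E : Type*} [NormedAddCommGroup E] [InnerProductSpace ℝ E]
    {n : ℕ} (hn : 0 < n) (z : Fin n → E) :
    empVar z = (1 / (2 * (n : ℝ) ^ 2)) * ∑ i, ∑ j, ‖z i - z j‖ ^ 2 := by
  have hn0 : (n : ℝ) ≠ 0 := Nat.cast_ne_zero.mpr hn.ne'
  set m : E := (1 / (n : ℝ)) • ∑ j, z j with hm
  set a : Fin n → E := fun i => z i - m with ha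
  have hsum : ∑ i, a i = 0 := by
    simp only [ha, Finset.sum_sub_distrib, Finset.sum_const, Finset.card_univ,
      Fintype.card_fin, hm, smul_smul]
    rw [← Nat.cast_smul_eq_nsmul ℝ, smul_smul]
    field_simp
    simp
  have hzz : ∀ i j, z i - z j = a i - a j := by
    intro i j; simp only [ha]; abel
  have key : ∑ i, ∑ j, ‖z i - z j‖ ^ 2 = 2 * (n : ℝ) * ∑ i, ‖a i‖ ^ 2 := by
    have : ∀ i j, ‖z i - z j‖ ^ 2
        = ‖a i‖ ^ 2 + ‖a j‖ ^ 2 - 2 * inner ℝ (a i) (a j) := by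
      intro i j
      rw [hzz i j, @norm_sub_sq_real]
      ring
    simp only [this]
    rw [Finset.sum_comm (f := fun i j => ‖a i‖ ^ 2 + ‖a j‖ ^ 2 - 2 * inner ℝ (a i) (a j))]
    simp only [Finset.sum_sub_distrib, Finset.sum_add_distrib, Finset.sum_const,
      Finset.card_univ, Fintype.card_fin, ← Finset.mul_sum, ← Finset.sum_mul]
    have hinner : ∑ j, ∑ i, (inner ℝ (a i) (a j) : ℝ) = 0 := by
      have : ∀ j, ∑ i, (inner ℝ (a i) (a j) : ℝ) = inner ℝ (∑ i, a i) (a j) := by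
        intro j; rw [sum_inner]
      simp [this, hsum]
    rw [hinner]
    simp only [nsmul_eq_mul, ← Finset.mul_sum]
    ring
  have : empVar z = (1 / (n : ℝ)) * ∑ i, ‖a i‖ ^ 2 := rfl
  rw [this, key]
  field_simp

theorem variance_preservation_of_random_projection
    {n d q : ℕ} (hn : 0 < n) (hd : 0 < d) (hq : 0 < q)
    (ε : ℝ) (hε : 0 < ε)
    (y : Fin n → EuclideanSpace ℝ (Fin d))
    (Φ : EuclideanSpace ℝ (Fin d) →ₗ[ℝ] EuclideanSpace ℝ (Fin q))
    (h : ∀ i j, (1 - ε) * ‖y i - y j‖ ^ 2 ≤ ‖Φ (y i) - Φ (y j)‖ ^ 2 ∧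
                ‖Φ (y i) - Φ (y j)‖ ^ 2 ≤ (1 + ε) * ‖y i - y j‖ ^ 2) :
    (1 - ε) * empVar y ≤ empVar (fun i => Φ (y i)) ∧
      empVar (fun i => Φ (y i)) ≤ (1 + ε) * empVar y := by
  have hn0 : (0:ℝ) < (n : ℝ) := Nat.cast_pos.mpr hn
  have hc : (0:ℝ) ≤ 1 / (2 * (n : ℝ) ^ 2) := by positivity
  rw [empVar_eq_pairwise hn, empVar_eq_pairwise hn]
  constructor
  · rw [mul_left_comm]
    refine mul_le_mul_of_nonneg_left ?_ hc
    rw [Finset.mul_sum]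
    refine Finset.sum_le_sum fun i _ => ?_
    rw [Finset.mul_sum]
    exact Finset.sum_le_sum fun j _ => (h i j).1
  · rw [mul_left_comm (1 + ε)]
    refine mul_le_mul_of_nonneg_left ?_ hc
    rw [Finset.mul_sum]
    refine Finset.sum_le_sum fun i _ => ?_
    rw [Finset.mul_sum]
    exact Finset.sum_le_sum fun j _ => (h i j).2
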